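/- arXiv:2407.03250 — 2 statements merged into one kernel-verified Lean document; each statement's English description precedes it below -/
import Mathlib

section
/- (Compression of Hadamard products.) Assume the random-embedding compression theorem: for every ε ∈ (0,1), n₁, n₂ ∈ ℕ, with r = ⌈9 log(3n₁n₂)/ε²⌉, and for every m ∈ ℕ and matrices A ∈ ℝ^{n₁×m}, B ∈ ℝ^{n₂×m}, there exists G ∈ ℝ^{n₁×n₂} of rank at most r with ‖ABᵀ − G‖_max ≤ ε‖A‖_{2,∞}‖B‖_{2,∞}. Then for every t ∈ ℕ, dimensions m₁,…,m_t ∈ ℕ, and matrices A_s ∈ ℝ^{n₁×m_s}, B_s ∈ ℝ^{n₂×m_s} (s = 1,…,t), there exists G ∈ ℝ^{n₁×n₂} of rank at most r such that ‖(A₁B₁ᵀ) ∗ ⋯ ∗ (A_tB_tᵀ) − G‖_max ≤ ε ∏_{s=1}^{t} ‖A_s‖_{2,∞}‖B_s‖_{2,∞}. -/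
open Matrix

lemma sqrt_prod_aux {ι : Type*} (s : Finset ι) (f : ι → ℝ) (hf : ∀ i ∈ s, 0 ≤ f i) :
    Real.sqrt (∏ i ∈ s, f i) = ∏ i ∈ s, Real.sqrt (f i) := by
  induction s using Finset.cons_induction with
  | empty => simp
  | cons a s ha ih =>
      rw [Finset.prod_cons, Finset.prod_cons,
        Real.sqrt_mul (hf a (Finset.mem_cons_self a s)),
        ih (fun i hi => hf i (Finset.mem_cons_of_mem hi))]

/-- Compression of Hadamard products: assuming the random-embedding compression theorem
(with rank `r = ⌈9 log(3 n₁ n₂)/ε²⌉`), a Hadamard product of `t` factorized matrices admits a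
rank-`r` entrywise approximation with error `ε` times the product of the `(2,∞)`-norms of all
the factors. -/
theorem stmt7 {n₁ n₂ : ℕ} (ε : ℝ) (hε : ε ∈ Set.Ioo (0:ℝ) 1)
    (r : ℕ) (hr : r = ⌈9 * Real.log (3 * n₁ * n₂) / ε ^ 2⌉₊)
    (compress : ∀ (m : ℕ) (A : Matrix (Fin n₁) (Fin m) ℝ) (B : Matrix (Fin n₂) (Fin m) ℝ),
      ∃ G : Matrix (Fin n₁) (Fin n₂) ℝ, G.rank ≤ r ∧
        ∀ i j, |(A * Bᵀ) i j - G i j| ≤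
          ε * ((⨆ i', Real.sqrt (∑ k, (A i' k) ^ 2)) * (⨆ j', Real.sqrt (∑ k, (B j' k) ^ 2))))
    (t : ℕ) (m : Fin t → ℕ)
    (A : ∀ s, Matrix (Fin n₁) (Fin (m s)) ℝ) (B : ∀ s, Matrix (Fin n₂) (Fin (m s)) ℝ) :
    ∃ G : Matrix (Fin n₁) (Fin n₂) ℝ, G.rank ≤ r ∧
      ∀ i j, |(∏ s, ((A s) * (B s)ᵀ) i j) - G i j| ≤
        ε * ∏ s, (⨆ i', Real.sqrt (∑ k, (A s i' k) ^ 2)) *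
              (⨆ j', Real.sqrt (∑ k, (B s j' k) ^ 2)) := by
  obtain ⟨hε0, hε1⟩ := hε
  rcases Nat.eq_zero_or_pos n₁ with h1 | h1
  · exact ⟨0, (by rw [Matrix.rank, Matrix.mulVecLin_zero, LinearMap.range_zero]; simp), fun i _ => absurd i.isLt (by omega)⟩
  rcases Nat.eq_zero_or_pos n₂ with h2 | h2
  · exact ⟨0, (by rw [Matrix.rank, Matrix.mulVecLin_zero, LinearMap.range_zero]; simp), fun _ j => absurd j.isLt (by omega)⟩
  haveI : Nonempty (Fin n₁) := ⟨⟨0, h1⟩⟩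
  haveI : Nonempty (Fin n₂) := ⟨⟨0, h2⟩⟩
  set M := ∏ s, m s with hM
  set e : (∀ s, Fin (m s)) ≃ Fin M := finPiFinEquiv with he
  set A' : Matrix (Fin n₁) (Fin M) ℝ := Matrix.of fun i k => ∏ s, A s i (e.symm k s) with hA'
  set B' : Matrix (Fin n₂) (Fin M) ℝ := Matrix.of fun j k => ∏ s, B s j (e.symm k s) with hB'
  obtain ⟨G, hGr, hG⟩ := compress M A' B'
  -- key factorization identity
  have key : ∀ i j, (A' * B'ᵀ) i j = ∏ s, ((A s) * (B s)ᵀ) i j := by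
    intro i j
    have : (A' * B'ᵀ) i j
        = ∑ g : ∀ s, Fin (m s), ∏ s, (A s i (g s) * B s j (g s)) := by
      rw [Matrix.mul_apply]
      exact Fintype.sum_equiv e.symm _ _ fun k => by
        simp [hA', hB', Finset.prod_mul_distrib]
    rw [this]
    rw [show (∑ g : ∀ s, Fin (m s), ∏ s, (A s i (g s) * B s j (g s)))
        = ∏ s, ∑ k, A s i k * B s j k by
      rw [Finset.prod_univ_sum, Fintype.piFinset_univ]]
    exact Finset.prod_congr rfl fun s _ => by rw [Matrix.mul_apply]; rfl
  -- row norms multiply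
  have rowA : ∀ i, Real.sqrt (∑ k, (A' i k) ^ 2)
      = ∏ s, Real.sqrt (∑ k, (A s i k) ^ 2) := by
    intro i
    have : (∑ k, (A' i k) ^ 2) = ∏ s, ∑ k, (A s i k) ^ 2 := by
      have h1 : (∑ k, (A' i k) ^ 2)
          = ∑ g : ∀ s, Fin (m s), ∏ s, (A s i (g s)) ^ 2 := by
        exact Fintype.sum_equiv e.symm _ _ fun k => by
          simp [hA', ← Finset.prod_pow]
      rw [h1, show (∑ g : ∀ s, Fin (m s), ∏ s, (A s i (g s)) ^ 2)
          = ∏ s, ∑ k, (A s i k) ^ 2 by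
        rw [Finset.prod_univ_sum, Fintype.piFinset_univ]]
    rw [this, sqrt_prod_aux _ _ (fun s _ => Finset.sum_nonneg fun k _ => sq_nonneg _)]
  have rowB : ∀ j, Real.sqrt (∑ k, (B' j k) ^ 2)
      = ∏ s, Real.sqrt (∑ k, (B s j k) ^ 2) := by
    intro j
    have : (∑ k, (B' j k) ^ 2) = ∏ s, ∑ k, (B s j k) ^ 2 := by
      have h1 : (∑ k, (B' j k) ^ 2)
          = ∑ g : ∀ s, Fin (m s), ∏ s, (B s j (g s)) ^ 2 := by
        exact Fintype.sum_equiv e.symm _ _ fun k => by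
          simp [hB', ← Finset.prod_pow]
      rw [h1, show (∑ g : ∀ s, Fin (m s), ∏ s, (B s j (g s)) ^ 2)
          = ∏ s, ∑ k, (B s j k) ^ 2 by
        rw [Finset.prod_univ_sum, Fintype.piFinset_univ]]
    rw [this, sqrt_prod_aux _ _ (fun s _ => Finset.sum_nonneg fun k _ => sq_nonneg _)]
  -- sup bounds
  set Sa : Fin t → ℝ := fun s => ⨆ i', Real.sqrt (∑ k, (A s i' k) ^ 2) with hSa
  set Sb : Fin t → ℝ := fun s => ⨆ j', Real.sqrt (∑ k, (B s j' k) ^ 2) with hSb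
  have hSaLe : ∀ s i, Real.sqrt (∑ k, (A s i k) ^ 2) ≤ Sa s := by
    intro s i
    simp only [hSa]
    exact le_ciSup (f := fun i' => Real.sqrt (∑ k, (A s i' k) ^ 2))
      (Set.Finite.bddAbove (Set.finite_range _)) i
  have hSbLe : ∀ s j, Real.sqrt (∑ k, (B s j k) ^ 2) ≤ Sb s := by
    intro s j
    simp only [hSb]
    exact le_ciSup (f := fun j' => Real.sqrt (∑ k, (B s j' k) ^ 2))
      (Set.Finite.bddAbove (Set.finite_range _)) j
  have hSa0 : ∀ s, 0 ≤ Sa s := fun s =>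
    le_trans (Real.sqrt_nonneg _) (hSaLe s (Classical.arbitrary _))
  have hSb0 : ∀ s, 0 ≤ Sb s := fun s =>
    le_trans (Real.sqrt_nonneg _) (hSbLe s (Classical.arbitrary _))
  have supA'le : (⨆ i', Real.sqrt (∑ k, (A' i' k) ^ 2)) ≤ ∏ s, Sa s := by
    refine ciSup_le fun i => ?_
    rw [rowA i]
    exact Finset.prod_le_prod (fun s _ => Real.sqrt_nonneg _) (fun s _ => hSaLe s i)
  have supB'le : (⨆ j', Real.sqrt (∑ k, (B' j' k) ^ 2)) ≤ ∏ s, Sb s := by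
    refine ciSup_le fun j => ?_
    rw [rowB j]
    exact Finset.prod_le_prod (fun s _ => Real.sqrt_nonneg _) (fun s _ => hSbLe s j)
  have supA'0 : 0 ≤ ⨆ i', Real.sqrt (∑ k, (A' i' k) ^ 2) :=
    le_trans (Real.sqrt_nonneg _)
      (le_ciSup (f := fun i' => Real.sqrt (∑ k, (A' i' k) ^ 2))
        (Set.Finite.bddAbove (Set.finite_range _)) (Classical.arbitrary _))
  have supB'0 : 0 ≤ ⨆ j', Real.sqrt (∑ k, (B' j' k) ^ 2) :=
    le_trans (Real.sqrt_nonneg _)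
      (le_ciSup (f := fun j' => Real.sqrt (∑ k, (B' j' k) ^ 2))
        (Set.Finite.bddAbove (Set.finite_range _)) (Classical.arbitrary _))
  refine ⟨G, hGr, fun i j => ?_⟩
  have h := hG i j
  rw [key i j] at h
  refine h.trans ?_
  refine mul_le_mul_of_nonneg_left ?_ hε0.le
  calc (⨆ i', Real.sqrt (∑ k, (A' i' k) ^ 2)) * (⨆ j', Real.sqrt (∑ k, (B' j' k) ^ 2))
      ≤ (∏ s, Sa s) * (∏ s, Sb s) :=
        mul_le_mul supA'le supB'le supB'0 (Finset.prod_nonneg fun s _ => hSa0 s)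
    _ = ∏ s, Sa s * Sb s := Finset.prod_mul_distrib.symm
end

section
/- (Factorization absorbing rank-one terms.) For any n₁, n₂, m, p ∈ ℕ, any A ∈ ℝ^{n₁×m} and B ∈ ℝ^{n₂×m}, and any rank-at-most-one matrices Z₁, …, Z_p ∈ ℝ^{n₁×n₂}, there exist C ∈ ℝ^{n₁×(m+p)} and D ∈ ℝ^{n₂×(m+p)} such that A Bᵀ + Σ_{i=1}^{p} Z_i = C Dᵀ, ‖C‖_{2,∞}² ≤ ‖A‖_{2,∞}² + Σ_{i=1}^{p} ‖Z_i‖_max, and ‖D‖_{2,∞}² ≤ ‖B‖_{2,∞}² + Σ_{i=1}^{p} ‖Z_i‖_max. -/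
open Matrix

/-- A matrix of rank at most one factors as an outer product. -/
lemma rank_le_one_outer {n₁ n₂ : ℕ} (Z : Matrix (Fin n₁) (Fin n₂) ℝ) (h : Z.rank ≤ 1) :
    ∃ (u : Fin n₁ → ℝ) (v : Fin n₂ → ℝ), ∀ a b, Z a b = u a * v b := by
  have h' : Module.finrank ℝ (LinearMap.range Z.mulVecLin) ≤ 1 := h
  obtain ⟨⟨u, hu⟩, hgen⟩ := finrank_le_one_iff.mp h'
  have key : ∀ b : Fin n₂, ∃ c : ℝ, ∀ a, Z a b = u a * c := by
    intro b
    obtain ⟨c, hc⟩ := hgen ⟨Z.mulVecLin (Pi.single b 1), LinearMap.mem_range_self _ _⟩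
    refine ⟨c, fun a => ?_⟩
    have h2 := congrArg (fun w : LinearMap.range Z.mulVecLin => (w : Fin n₁ → ℝ) a) hc
    simp only [Submodule.coe_smul, Pi.smul_apply, smul_eq_mul] at h2
    have h3 : Z.mulVecLin (Pi.single b 1) a = Z a b := by
      simp [Matrix.mulVecLin_apply, Matrix.mulVec_single]
    rw [h3] at h2
    rw [← h2, mul_comm]
  choose w hw using key
  exact ⟨u, w, fun a b => hw b a⟩

/-- Balanced outer-product factorization: entries of the factors are bounded
by the square root of the max norm. -/
lemma rank_le_one_balanced {n₁ n₂ : ℕ} (Z : Matrix (Fin n₁) (Fin n₂) ℝ) (h : Z.rank ≤ 1) :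
    ∃ (u : Fin n₁ → ℝ) (v : Fin n₂ → ℝ), (∀ a b, Z a b = u a * v b) ∧
      (∀ a, (u a) ^ 2 ≤ ⨆ q : Fin n₁ × Fin n₂, |Z q.1 q.2|) ∧
      (∀ b, (v b) ^ 2 ≤ ⨆ q : Fin n₁ × Fin n₂, |Z q.1 q.2|) := by
  set S := ⨆ q : Fin n₁ × Fin n₂, |Z q.1 q.2| with hS
  obtain ⟨u, v, huv⟩ := rank_le_one_outer Z h
  rcases isEmpty_or_nonempty (Fin n₁) with h1 | h1
  · exact ⟨0, 0, fun a => isEmptyElim a, fun a => isEmptyElim a,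
      fun b => by simpa using Real.iSup_nonneg fun q => abs_nonneg _⟩
  rcases isEmpty_or_nonempty (Fin n₂) with h2 | h2
  · exact ⟨0, 0, fun a b => isEmptyElim b,
      fun a => by simpa using Real.iSup_nonneg fun q => abs_nonneg _,
      fun b => isEmptyElim b⟩
  obtain ⟨a₀, ha₀⟩ := Finite.exists_max fun a => |u a|
  obtain ⟨b₀, hb₀⟩ := Finite.exists_max fun b => |v b|
  set α := |u a₀| with hα
  set β := |v b₀| with hβ
  have hαβS : α * β ≤ S := by
    have : |Z a₀ b₀| ≤ S :=
      le_ciSup (f := fun q : Fin n₁ × Fin n₂ => |Z q.1 q.2|)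
        (Set.Finite.bddAbove (Set.finite_range _)) ⟨a₀, b₀⟩
    rwa [huv, abs_mul] at this
  rcases eq_or_ne α 0 with hα0 | hα0
  · have hz : ∀ a b, Z a b = 0 := by
      intro a b
      have : |u a| = 0 := le_antisymm (hα0 ▸ ha₀ a) (abs_nonneg _)
      rw [huv, abs_eq_zero.mp this, zero_mul]
    have hSnn : (0:ℝ) ≤ S := Real.iSup_nonneg fun q => abs_nonneg _
    exact ⟨0, 0, fun a b => by simp [hz], fun a => by simpa using hSnn,
      fun b => by simpa using hSnn⟩
  rcases eq_or_ne β 0 with hβ0 | hβ0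
  · have hz : ∀ a b, Z a b = 0 := by
      intro a b
      have : |v b| = 0 := le_antisymm (hβ0 ▸ hb₀ b) (abs_nonneg _)
      rw [huv, abs_eq_zero.mp this, mul_zero]
    have hSnn : (0:ℝ) ≤ S := Real.iSup_nonneg fun q => abs_nonneg _
    exact ⟨0, 0, fun a b => by simp [hz], fun a => by simpa using hSnn,
      fun b => by simpa using hSnn⟩
  have hαpos : 0 < α := lt_of_le_of_ne (abs_nonneg _) (Ne.symm hα0)
  have hβpos : 0 < β := lt_of_le_of_ne (abs_nonneg _) (Ne.symm hβ0)
  set t := Real.sqrt (β / α) with ht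
  have htpos : 0 < t := Real.sqrt_pos.mpr (div_pos hβpos hαpos)
  refine ⟨fun a => t * u a, fun b => t⁻¹ * v b, fun a b => ?_, fun a => ?_, fun b => ?_⟩
  · rw [huv]; field_simp
  · have ht2 : t ^ 2 = β / α := Real.sq_sqrt (le_of_lt (div_pos hβpos hαpos))
    have : (t * u a) ^ 2 = (β / α) * (u a) ^ 2 := by rw [mul_pow, ht2]
    rw [this]
    have hua : (u a) ^ 2 ≤ α ^ 2 := by
      rw [← sq_abs (u a), ← sq_abs (α)]
      exact pow_le_pow_left₀ (abs_nonneg _) (le_trans (ha₀ a) (le_abs_self _)) 2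
    calc (β / α) * (u a) ^ 2 ≤ (β / α) * α ^ 2 := by
          exact mul_le_mul_of_nonneg_left hua (le_of_lt (div_pos hβpos hαpos))
      _ = α * β := by field_simp
      _ ≤ S := hαβS
  · have ht2 : (t⁻¹) ^ 2 = α / β := by
      rw [inv_pow, Real.sq_sqrt (le_of_lt (div_pos hβpos hαpos)), inv_div]
    have : (t⁻¹ * v b) ^ 2 = (α / β) * (v b) ^ 2 := by rw [mul_pow, ht2]
    rw [this]
    have hvb : (v b) ^ 2 ≤ β ^ 2 := by
      rw [← sq_abs (v b), ← sq_abs (β)]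
      exact pow_le_pow_left₀ (abs_nonneg _) (le_trans (hb₀ b) (le_abs_self _)) 2
    calc (α / β) * (v b) ^ 2 ≤ (α / β) * β ^ 2 := by
          exact mul_le_mul_of_nonneg_left hvb (le_of_lt (div_pos hαpos hβpos))
      _ = α * β := by field_simp
      _ ≤ S := hαβS

/-- Factorization absorbing rank-one terms: `A Bᵀ + Σᵢ Zᵢ = C Dᵀ` with
`‖C‖_{2,∞}² ≤ ‖A‖_{2,∞}² + Σᵢ ‖Zᵢ‖_max` and `‖D‖_{2,∞}² ≤ ‖B‖_{2,∞}² + Σᵢ ‖Zᵢ‖_max`. -/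
theorem stmt11 {n₁ n₂ m p : ℕ}
    (A : Matrix (Fin n₁) (Fin m) ℝ) (B : Matrix (Fin n₂) (Fin m) ℝ)
    (Z : Fin p → Matrix (Fin n₁) (Fin n₂) ℝ) (hZ : ∀ i, (Z i).rank ≤ 1) :
    ∃ (C : Matrix (Fin n₁) (Fin m ⊕ Fin p) ℝ) (D : Matrix (Fin n₂) (Fin m ⊕ Fin p) ℝ),
      A * Bᵀ + ∑ i, Z i = C * Dᵀ ∧
      (⨆ i, ∑ k, (C i k) ^ 2) ≤
        (⨆ i, ∑ k, (A i k) ^ 2) + ∑ i, ⨆ q : Fin n₁ × Fin n₂, |Z i q.1 q.2| ∧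
      (⨆ j, ∑ k, (D j k) ^ 2) ≤
        (⨆ j, ∑ k, (B j k) ^ 2) + ∑ i, ⨆ q : Fin n₁ × Fin n₂, |Z i q.1 q.2| := by
  choose u v huv hu hv using fun i => rank_le_one_balanced (Z i) (hZ i)
  set U : Matrix (Fin n₁) (Fin p) ℝ := fun a i => u i a with hU
  set V : Matrix (Fin n₂) (Fin p) ℝ := fun b i => v i b with hV
  refine ⟨fromCols A U, fromCols B V, ?_, ?_, ?_⟩
  · rw [transpose_fromCols, fromCols_mul_fromRows]
    congr 1
    ext a b
    simp only [Matrix.mul_apply, Matrix.sum_apply, transpose_apply]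
    exact Finset.sum_congr rfl fun i _ => huv i a b
  · refine Real.iSup_le (fun a => ?_) ?_
    · rw [Fintype.sum_sum_type]
      have h1 : ∑ k, (fromCols A U a (Sum.inl k)) ^ 2 ≤ ⨆ i, ∑ k, (A i k) ^ 2 := by
        simp only [fromCols_apply_inl]
        exact le_ciSup (f := fun i => ∑ k, (A i k) ^ 2)
          (Set.Finite.bddAbove (Set.finite_range _)) a
      have h2 : ∑ i, (fromCols A U a (Sum.inr i)) ^ 2 ≤
          ∑ i, ⨆ q : Fin n₁ × Fin n₂, |Z i q.1 q.2| := by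
        refine Finset.sum_le_sum fun i _ => ?_
        rw [fromCols_apply_inr]; exact hu i a
      exact add_le_add h1 h2
    · exact add_nonneg (Real.iSup_nonneg fun i => Finset.sum_nonneg fun k _ => sq_nonneg _)
        (Finset.sum_nonneg fun i _ => Real.iSup_nonneg fun q => abs_nonneg _)
  · refine Real.iSup_le (fun b => ?_) ?_
    · rw [Fintype.sum_sum_type]
      have h1 : ∑ k, (fromCols B V b (Sum.inl k)) ^ 2 ≤ ⨆ j, ∑ k, (B j k) ^ 2 := by
        simp only [fromCols_apply_inl]
        exact le_ciSup (f := fun j => ∑ k, (B j k) ^ 2)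
          (Set.Finite.bddAbove (Set.finite_range _)) b
      have h2 : ∑ i, (fromCols B V b (Sum.inr i)) ^ 2 ≤
          ∑ i, ⨆ q : Fin n₁ × Fin n₂, |Z i q.1 q.2| := by
        refine Finset.sum_le_sum fun i _ => ?_
        rw [fromCols_apply_inr]; exact hv i b
      exact add_le_add h1 h2
    · exact add_nonneg (Real.iSup_nonneg fun j => Finset.sum_nonneg fun k _ => sq_nonneg _)
        (Finset.sum_nonneg fun i _ => Real.iSup_nonneg fun q => abs_nonneg _)
end
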